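/- Discrete energy estimate for Rothe's scheme: if u^i solves (−Δ_Ω u^i, v) + (δ²u^i, v) = (f^i, v) for all test functions v vanishing on ∂Ω, where δu^i = (u^i − u^{i−1})/ℓ and δ²u^i = (δu^i − δu^{i−1})/ℓ, then for 0 < ℓ < 1: (1−ℓ)(‖∇u^i‖²_{L²} + ‖δu^i‖²_{L²}) ≤ ‖∇u^{i−1}‖²_{L²} + ‖δu^{i−1}‖²_{L²} + ℓ‖f^i‖²_{L²}. -/
import Mathlib


open Finset

/-- Graph (Dirichlet) Laplacian. -/
noncomputable def graphLap {V : Type*} [Fintype V] (ω : V → V → ℝ) (μ : V → ℝ)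
    (u : V → ℝ) (x : V) : ℝ :=
  (1 / μ x) * ∑ y, ω x y * (u y - u x)

/-- Gradient form `Γ(u,v)`. -/
noncomputable def graphGamma {V : Type*} [Fintype V] (ω : V → V → ℝ) (μ : V → ℝ)
    (u v : V → ℝ) (x : V) : ℝ :=
  (1 / (2 * μ x)) * ∑ y, ω x y * (u y - u x) * (v y - v x)

lemma green_aux {V : Type*} [Fintype V] (ω : V → V → ℝ) (μ : V → ℝ)
    (hsymm : ∀ x y, ω x y = ω y x) (hμ : ∀ x, 0 < μ x)
    (Ωo : Finset V) (u v : V → ℝ) (hv : ∀ x, x ∉ Ωo → v x = 0) :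
    ∑ x ∈ Ωo, (-(graphLap ω μ u x)) * v x * μ x
      = 2⁻¹ * ∑ x, ∑ y, ω x y * (u y - u x) * (v y - v x) := by
  have h1 : ∑ x ∈ Ωo, (-(graphLap ω μ u x)) * v x * μ x
      = ∑ x, (-(graphLap ω μ u x)) * v x * μ x :=
    Finset.sum_subset (Finset.subset_univ Ωo) (fun x _ hx =>
      show (-(graphLap ω μ u x)) * v x * μ x = 0 by rw [hv x hx]; ring)
  have h2 : ∀ x, (-(graphLap ω μ u x)) * v x * μ x
      = ∑ y, (-(ω x y * (u y - u x) * v x)) := by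
    intro x
    unfold graphLap
    have hm : (1 / μ x) * μ x = 1 := one_div_mul_cancel (hμ x).ne'
    calc -((1 / μ x) * ∑ y, ω x y * (u y - u x)) * v x * μ x
        = (∑ y, ω x y * (u y - u x)) * (-(v x)) * ((1 / μ x) * μ x) := by ring
      _ = (∑ y, ω x y * (u y - u x)) * (-(v x)) := by rw [hm]; ring
      _ = ∑ y, (-(ω x y * (u y - u x) * v x)) := by
          rw [Finset.sum_mul]; exact Finset.sum_congr rfl fun y _ => by ring
  rw [h1, Finset.sum_congr rfl fun x _ => h2 x]
  have hU : (∑ x, ∑ y, ω x y * (u y - u x) * v y)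
      = ∑ x, ∑ y, (-(ω x y * (u y - u x) * v x)) := by
    rw [Finset.sum_comm]
    exact Finset.sum_congr rfl fun x _ => Finset.sum_congr rfl fun y _ => by
      rw [hsymm]; ring
  have hsplit : ∑ x, ∑ y, ω x y * (u y - u x) * (v y - v x)
      = (∑ x, ∑ y, ω x y * (u y - u x) * v y)
        + ∑ x, ∑ y, (-(ω x y * (u y - u x) * v x)) := by
    rw [← Finset.sum_add_distrib]
    exact Finset.sum_congr rfl fun x _ => by
      rw [← Finset.sum_add_distrib]
      exact Finset.sum_congr rfl fun y _ => by ring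
  rw [hsplit, hU]
  ring

lemma gamma_sum_aux {V : Type*} [Fintype V] (ω : V → V → ℝ) (μ : V → ℝ)
    (hsymm : ∀ x y, ω x y = ω y x) (hμ : ∀ x, 0 < μ x)
    (Ω Ωo : Finset V) (hsub : Ωo ⊆ Ω)
    (hnb : ∀ x ∈ Ωo, ∀ y, ω x y ≠ 0 → y ∈ Ω)
    (u w : V → ℝ) (hu : ∀ x, x ∉ Ωo → u x = 0) (hw : ∀ x, x ∉ Ωo → w x = 0) :
    ∑ x ∈ Ω, graphGamma ω μ u w x * μ x
      = 2⁻¹ * ∑ x, ∑ y, ω x y * (u y - u x) * (w y - w x) := by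
  have hzero : ∀ x, x ∉ Ω → ∀ y, ω x y * (u y - u x) * (w y - w x) = 0 := by
    intro x hx y
    by_cases hω : ω x y = 0
    · rw [hω]; ring
    · have hxo : x ∉ Ωo := fun h => hx (hsub h)
      by_cases hy : y ∈ Ωo
      · exact absurd (hnb y hy x (by rw [← hsymm]; exact hω)) hx
      · rw [hu y hy, hu x hxo, hw y hy, hw x hxo]; ring
  have h1 : ∑ x ∈ Ω, graphGamma ω μ u w x * μ x
      = ∑ x, graphGamma ω μ u w x * μ x :=
    Finset.sum_subset (Finset.subset_univ Ω) (fun x _ hx =>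
      show graphGamma ω μ u w x * μ x = 0 by
        unfold graphGamma
        rw [Finset.sum_congr rfl fun y _ => hzero x hx y]
        simp)
  rw [h1, Finset.mul_sum]
  refine Finset.sum_congr rfl fun x _ => ?_
  unfold graphGamma
  rw [show (1 / (2 * μ x)) * (∑ y, ω x y * (u y - u x) * (w y - w x)) * μ x
      = 2⁻¹ * (∑ y, ω x y * (u y - u x) * (w y - w x)) * ((1 / μ x) * μ x) by ring]
  rw [one_div_mul_cancel (hμ x).ne']
  ring
/-- Discrete energy estimate for Rothe's scheme: if `u^i` solves
`(−Δ_Ω u^i, v) + (δ²u^i, v) = (f^i, v)` for all test functions `v`, then for `0 < ℓ < 1`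
`(1−ℓ)(‖∇u^i‖² + ‖δu^i‖²) ≤ ‖∇u^{i−1}‖² + ‖δu^{i−1}‖² + ℓ‖f^i‖²`. -/
theorem rothe_energy_estimate {V : Type*} [Fintype V]
    (ω : V → V → ℝ) (μ : V → ℝ)
    (hsymm : ∀ x y, ω x y = ω y x) (hnonneg : ∀ x y, 0 ≤ ω x y)
    (hμ : ∀ x, 0 < μ x)
    (Ω Ωo : Finset V) (hsub : Ωo ⊆ Ω) (hΩone : Ωo.Nonempty)
    (hnb : ∀ x ∈ Ωo, ∀ y, ω x y ≠ 0 → y ∈ Ω)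
    (ℓ : ℝ) (hℓ0 : 0 < ℓ) (hℓ1 : ℓ < 1)
    (ui uim1 uim2 fi : V → ℝ)
    (hui : ∀ x, x ∉ Ωo → ui x = 0) (huim1 : ∀ x, x ∉ Ωo → uim1 x = 0)
    (huim2 : ∀ x, x ∉ Ωo → uim2 x = 0) (hfi : ∀ x, x ∉ Ωo → fi x = 0)
    (heq : ∀ v : V → ℝ, (∀ x, x ∉ Ωo → v x = 0) →
      ∑ x ∈ Ωo, (-(graphLap ω μ ui x)) * v x * μ x
        + ∑ x ∈ Ωo, (((ui x - uim1 x) / ℓ - (uim1 x - uim2 x) / ℓ) / ℓ) * v x * μ x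
      = ∑ x ∈ Ωo, fi x * v x * μ x) :
    (1 - ℓ) * (∑ x ∈ Ω, graphGamma ω μ ui ui x * μ x
        + ∑ x ∈ Ω, ((ui x - uim1 x) / ℓ) ^ 2 * μ x)
      ≤ ∑ x ∈ Ω, graphGamma ω μ uim1 uim1 x * μ x
        + ∑ x ∈ Ω, ((uim1 x - uim2 x) / ℓ) ^ 2 * μ x
        + ℓ * ∑ x ∈ Ω, (fi x) ^ 2 * μ x := by
  set v : V → ℝ := fun x => ui x - uim1 x with hvdef
  have hvs : ∀ x, x ∉ Ωo → v x = 0 := fun x hx => by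
    simp only [hvdef, hui x hx, huim1 x hx, sub_zero]
  have h := heq v hvs
  rw [green_aux ω μ hsymm hμ Ωo ui v hvs] at h
  have ht2 : ∑ x ∈ Ωo, (((ui x - uim1 x) / ℓ - (uim1 x - uim2 x) / ℓ) / ℓ) * v x * μ x
      = ∑ x, ((ui x - uim1 x) / ℓ - (uim1 x - uim2 x) / ℓ) * ((ui x - uim1 x) / ℓ) * μ x := by
    rw [Finset.sum_subset (Finset.subset_univ Ωo) (fun x _ hx =>
      show (((ui x - uim1 x) / ℓ - (uim1 x - uim2 x) / ℓ) / ℓ) * v x * μ x = 0 by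
        rw [hvs x hx]; ring)]
    refine Finset.sum_congr rfl fun x _ => ?_
    show (((ui x - uim1 x) / ℓ - (uim1 x - uim2 x) / ℓ) / ℓ) * (ui x - uim1 x) * μ x = _
    field_simp
  have ht3 : ∑ x ∈ Ωo, fi x * v x * μ x
      = ℓ * ∑ x, fi x * ((ui x - uim1 x) / ℓ) * μ x := by
    rw [Finset.sum_subset (Finset.subset_univ Ωo) (fun x _ hx =>
      show fi x * v x * μ x = 0 by rw [hvs x hx]; ring), Finset.mul_sum]
    refine Finset.sum_congr rfl fun x _ => ?_
    show fi x * (ui x - uim1 x) * μ x = _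
    field_simp
  rw [ht2, ht3] at h
  have e2 : 2 * (∑ x, ∑ y, ω x y * (ui y - ui x) * (v y - v x))
      = (∑ x, ∑ y, ω x y * (ui y - ui x) * (ui y - ui x))
        - (∑ x, ∑ y, ω x y * (uim1 y - uim1 x) * (uim1 y - uim1 x))
        + (∑ x, ∑ y, ω x y * (v y - v x) * (v y - v x)) := by
    rw [Finset.mul_sum, ← Finset.sum_sub_distrib, ← Finset.sum_add_distrib]
    refine Finset.sum_congr rfl fun x _ => ?_
    rw [Finset.mul_sum, ← Finset.sum_sub_distrib, ← Finset.sum_add_distrib]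
    refine Finset.sum_congr rfl fun y _ => ?_
    simp only [hvdef]
    ring
  have e3 : 2 * ∑ x, ((ui x - uim1 x) / ℓ - (uim1 x - uim2 x) / ℓ) * ((ui x - uim1 x) / ℓ) * μ x
      = ∑ x, ((ui x - uim1 x) / ℓ) ^ 2 * μ x - ∑ x, ((uim1 x - uim2 x) / ℓ) ^ 2 * μ x
        + ∑ x, ((ui x - uim1 x) / ℓ - (uim1 x - uim2 x) / ℓ) ^ 2 * μ x := by
    rw [Finset.mul_sum, ← Finset.sum_sub_distrib, ← Finset.sum_add_distrib]
    exact Finset.sum_congr rfl fun x _ => by ring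
  have e4 : 2 * ∑ x, fi x * ((ui x - uim1 x) / ℓ) * μ x
      ≤ ∑ x, fi x ^ 2 * μ x + ∑ x, ((ui x - uim1 x) / ℓ) ^ 2 * μ x := by
    have hle := Finset.sum_le_sum (s := Finset.univ)
      (fun x _ => (by nlinarith [sq_nonneg (fi x - (ui x - uim1 x) / ℓ), (hμ x).le] :
        2 * (fi x * ((ui x - uim1 x) / ℓ) * μ x)
          ≤ fi x ^ 2 * μ x + ((ui x - uim1 x) / ℓ) ^ 2 * μ x))
    rw [← Finset.mul_sum] at hle
    rw [Finset.sum_add_distrib] at hle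
    exact hle
  have hSvv : 0 ≤ ∑ x, ∑ y, ω x y * (v y - v x) * (v y - v x) :=
    Finset.sum_nonneg fun x _ => Finset.sum_nonneg fun y _ => by
      rw [mul_assoc]; exact mul_nonneg (hnonneg x y) (mul_self_nonneg _)
  have hSii : 0 ≤ ∑ x, ∑ y, ω x y * (ui y - ui x) * (ui y - ui x) :=
    Finset.sum_nonneg fun x _ => Finset.sum_nonneg fun y _ => by
      rw [mul_assoc]; exact mul_nonneg (hnonneg x y) (mul_self_nonneg _)
  have hDdiff : 0 ≤ ∑ x, ((ui x - uim1 x) / ℓ - (uim1 x - uim2 x) / ℓ) ^ 2 * μ x :=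
    Finset.sum_nonneg fun x _ => mul_nonneg (sq_nonneg _) (hμ x).le
  have hGi : ∑ x ∈ Ω, graphGamma ω μ ui ui x * μ x
      = 2⁻¹ * ∑ x, ∑ y, ω x y * (ui y - ui x) * (ui y - ui x) :=
    gamma_sum_aux ω μ hsymm hμ Ω Ωo hsub hnb ui ui hui hui
  have hGm : ∑ x ∈ Ω, graphGamma ω μ uim1 uim1 x * μ x
      = 2⁻¹ * ∑ x, ∑ y, ω x y * (uim1 y - uim1 x) * (uim1 y - uim1 x) :=
    gamma_sum_aux ω μ hsymm hμ Ω Ωo hsub hnb uim1 uim1 huim1 huim1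
  have hDΩ : ∑ x ∈ Ω, ((ui x - uim1 x) / ℓ) ^ 2 * μ x
      = ∑ x, ((ui x - uim1 x) / ℓ) ^ 2 * μ x :=
    Finset.sum_subset (Finset.subset_univ Ω) fun x _ hx => by
      have hxo : x ∉ Ωo := fun hh => hx (hsub hh)
      rw [hui x hxo, huim1 x hxo]; simp
  have hDΩ' : ∑ x ∈ Ω, ((uim1 x - uim2 x) / ℓ) ^ 2 * μ x
      = ∑ x, ((uim1 x - uim2 x) / ℓ) ^ 2 * μ x :=
    Finset.sum_subset (Finset.subset_univ Ω) fun x _ hx => by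
      have hxo : x ∉ Ωo := fun hh => hx (hsub hh)
      rw [huim1 x hxo, huim2 x hxo]; simp
  have hFΩ : ∑ x ∈ Ω, (fi x) ^ 2 * μ x = ∑ x, (fi x) ^ 2 * μ x :=
    Finset.sum_subset (Finset.subset_univ Ω) fun x _ hx => by
      rw [hfi x fun hh => hx (hsub hh)]; simp
  rw [hGi, hGm, hDΩ, hDΩ', hFΩ]
  have hq := mul_le_mul_of_nonneg_left e4 hℓ0.le
  have hs : 0 ≤ ℓ * ∑ x, ∑ y, ω x y * (ui y - ui x) * (ui y - ui x) :=
    mul_nonneg hℓ0.le hSii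
  nlinarith [h, e2, e3, hq, hs, hSvv, hDdiff]
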